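/- Let E be a Banach f-algebra and P : E → E a band projection, i.e., a positive linear map with P ∘ P = P and 0 ≤ P(x) ≤ x for all x ≥ 0. If a net (x_α) satisfies x_α →mw x in E, then P(x_α) →mw P(x) in E. -/
import Mathlib


open Filter Topology

/-- A net `x : ι → E` (along a filter `l`) in a Banach `f`-algebra is *multiplicative weak
convergent* (`mw`-convergent) to `a` if `|x i - a| * u` converges weakly to `0` for every
`u ≥ 0`, i.e. `f (|x i - a| * u) → 0` for every continuous linear functional `f` on `E`. -/
def MWTendsto {E : Type*} [NonUnitalNormedCommRing E] [Lattice E] [NormedSpace ℝ E]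
    {ι : Type*} (l : Filter ι) (x : ι → E) (a : E) : Prop :=
  ∀ u : E, 0 ≤ u → ∀ f : E →L[ℝ] ℝ, Tendsto (fun i => f (|x i - a| * u)) l (𝓝 0)

/-- Band projections preserve `mw`-convergence. -/
theorem mw_band_projection
    {E : Type*} [NonUnitalNormedCommRing E] [Lattice E]
    [CovariantClass E E (· + ·) (· ≤ ·)] [NormedSpace ℝ E] [CompleteSpace E]
    (hsolid : ∀ a b : E, |a| ≤ |b| → ‖a‖ ≤ ‖b‖)
    (hmulpos : ∀ a b : E, 0 ≤ a → 0 ≤ b → 0 ≤ a * b)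
    (hfalg : ∀ a b c : E, a ⊓ b = 0 → 0 ≤ c → (a * c) ⊓ b = 0)
    (P : E →ₗ[ℝ] E) (hidem : ∀ z : E, P (P z) = P z)
    (hband : ∀ z : E, 0 ≤ z → 0 ≤ P z ∧ P z ≤ z)
    {A : Type*} [Nonempty A] [SemilatticeSup A]
    (x : A → E) (a : E) (hx : MWTendsto atTop x a) :
    MWTendsto atTop (fun α => P (x α)) (P a) := by
  haveI : CovariantClass E E (Function.swap (· + ·)) (· ≤ ·) :=
    ⟨fun c a b h => by simpa [add_comm] using add_le_add_left h c⟩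
  -- P and Q := I - P are monotone
  have hmono : ∀ z w : E, z ≤ w → P z ≤ P w := by
    intro z w h
    have h0 : 0 ≤ P (w - z) := (hband _ (sub_nonneg.2 h)).1
    rw [map_sub] at h0
    exact sub_nonneg.1 h0
  have hQmono : ∀ z w : E, z ≤ w → z - P z ≤ w - P w := by
    intro z w h
    have h0 : 0 ≤ (w - z) - P (w - z) := sub_nonneg.2 (hband _ (sub_nonneg.2 h)).2
    rw [map_sub] at h0
    have he : (w - P w) - (z - P z) = w - z - (P w - P z) := by abel
    exact sub_nonneg.1 (by rw [he]; exact h0)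
  -- the ranges of P and Q consist of pairwise disjoint elements
  have hdisj : ∀ z w : E, 0 ≤ z → 0 ≤ w → P z ⊓ (w - P w) = 0 := by
    intro z w hz hw
    set d := P z ⊓ (w - P w) with hd
    have hd0 : 0 ≤ d := le_inf (hband z hz).1 (sub_nonneg.2 (hband w hw).2)
    have hPd : P d = 0 := by
      have h1 := hmono d (w - P w) inf_le_right
      rw [map_sub, hidem] at h1
      exact le_antisymm (by simpa using h1) (hband d hd0).1
    have hQd : d - P d ≤ 0 := by
      have h1 := hQmono d (P z) inf_le_left
      rw [hidem] at h1
      simpa using h1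
    have : d ≤ 0 := by rw [hPd, sub_zero] at hQd; exact hQd
    exact le_antisymm this hd0
  -- P commutes with absolute value
  have habs : ∀ z : E, |P z| = P |z| := by
    intro z
    have hp : (0:E) ≤ z⁺ := posPart_nonneg z
    have hn : (0:E) ≤ z⁻ := negPart_nonneg z
    have hdisj' : P z⁺ ⊓ P z⁻ = 0 := by
      have h1 : P z⁺ ⊓ P z⁻ ≤ z⁺ ⊓ z⁻ :=
        inf_le_inf (hband _ hp).2 (hband _ hn).2
      rw [posPart_inf_negPart_eq_zero] at h1
      exact le_antisymm h1 (le_inf (hband _ hp).1 (hband _ hn).1)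
    have hPz : P z = P z⁺ - P z⁻ := by
      rw [← map_sub, posPart_sub_negPart]
    have habs' : |P z⁺ - P z⁻| = P z⁺ + P z⁻ := by
      have h1 := sup_sub_inf_eq_abs_sub (P z⁻) (P z⁺)
      have h2 := inf_add_sup (P z⁺) (P z⁻)
      rw [hdisj', zero_add] at h2
      rw [← h1, inf_comm, hdisj', sub_zero, sup_comm, h2]
    rw [hPz, habs', ← map_add, posPart_add_negPart]
  -- multiplication by a positive element commutes with P on positives
  have hmul : ∀ v u : E, 0 ≤ v → 0 ≤ u → P (v * u) = P v * u := by
    intro v u hv hu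
    -- P ((v - P v) * u) = 0
    have h1 : P ((v - P v) * u) = 0 := by
      have hQv : 0 ≤ v - P v := sub_nonneg.2 (hband v hv).2
      have hw : 0 ≤ (v - P v) * u := hmulpos _ _ hQv hu
      have hd : (v - P v) ⊓ P ((v - P v) * u) = 0 := by
        have := hdisj ((v - P v) * u) v (hw) hv
        rw [inf_comm] at this
        exact this
      have h2 : ((v - P v) * u) ⊓ P ((v - P v) * u) = 0 := hfalg _ _ _ hd hu
      have h3 : P ((v - P v) * u) ≤ (v - P v) * u := (hband _ hw).2
      have h4 : ((v - P v) * u) ⊓ P ((v - P v) * u) = P ((v - P v) * u) :=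
        inf_eq_right.2 h3
      rw [h4] at h2; exact h2
    -- P (P v * u) = P v * u
    have h5 : P (P v * u) = P v * u := by
      have hPv : 0 ≤ P v := (hband v hv).1
      have hw : 0 ≤ P v * u := hmulpos _ _ hPv hu
      have hd : P v ⊓ ((P v * u) - P (P v * u)) = 0 := hdisj v (P v * u) hv hw
      have hd' : P v ⊓ ((P v * u) - P (P v * u)) = 0 := by
        have := hdisj v (P v * u) hv hw; exact this
      have h2 : (P v * u) ⊓ ((P v * u) - P (P v * u)) = 0 := hfalg _ _ _ hd' hu
      have h3 : (P v * u) - P (P v * u) ≤ P v * u := sub_le_self _ (hband _ hw).1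
      have h4 : (P v * u) ⊓ ((P v * u) - P (P v * u)) = (P v * u) - P (P v * u) :=
        inf_eq_right.2 h3
      rw [h4] at h2
      exact (sub_eq_zero.1 h2).symm
    have hvu : v * u = P v * u + (v - P v) * u := by rw [sub_mul]; abel
    rw [hvu, map_add, h1, add_zero, h5]
  -- P is bounded: ‖P z‖ ≤ ‖z‖
  have hbdd : ∀ z : E, ‖P z‖ ≤ 1 * ‖z‖ := by
    intro z
    rw [one_mul]
    exact hsolid (P z) z (by rw [habs z]; exact (hband _ (abs_nonneg z)).2)
  set Pc : E →L[ℝ] E := P.mkContinuous 1 hbdd with hPc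
  intro u hu f
  have key : ∀ i, f (|P (x i) - P a| * u) = (f.comp Pc) (|x i - a| * u) := by
    intro i
    have : |P (x i) - P a| * u = P (|x i - a| * u) := by
      rw [← map_sub, habs, ← hmul _ _ (abs_nonneg _) hu]
    rw [this]
    rfl
  simp only [key]
  exact hx u hu (f.comp Pc)
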